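/- arXiv:2510.20984 — 2 statements merged into one kernel-verified Lean document; each statement's English description precedes it below -/
import Mathlib

section
/- Let B = [b_1,...,b_n] be an invertible matrix in R^{n×n} whose Gram–Schmidt coefficients satisfy |μ_{j,i}| ≤ 1/2 for all j < i, with Gram–Schmidt vectors b_1^*,...,b_n^*. For any target t ∈ R^n, let v = B⌊B^{-1}t⌉ be the Babai rounding output (coordinatewise nearest-integer rounding). Then ‖t - v‖ ≤ (1/2) √( Σ_{j=1}^n (1 + (n-j)/2)² ‖b_j^*‖² ). -/
open Finset

lemma eucl_sum_apply {n : ℕ} {ι : Type*} [DecidableEq ι] (s : Finset ι)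
    (f : ι → EuclideanSpace ℝ (Fin n)) (k : Fin n) :
    (∑ i ∈ s, f i) k = ∑ i ∈ s, f i k := by
  induction s using Finset.induction with
  | empty => rfl
  | insert _ _ h ih => rw [Finset.sum_insert h, Finset.sum_insert h, ← ih]; rfl

/-- Gram–Schmidt orthogonalization of a family of vectors in `EuclideanSpace ℝ (Fin n)`. -/
noncomputable def gramSchmidtFin (n : ℕ) (b : Fin n → EuclideanSpace ℝ (Fin n)) :
    Fin n → EuclideanSpace ℝ (Fin n) :=
  @InnerProductSpace.gramSchmidt ℝ _ _ _ _ (Fin n) _ _ (inferInstanceAs (WellFoundedLT (Fin n))) b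

theorem babai_rounding_error_bound_size_reduced
    (n : ℕ) (B : Matrix (Fin n) (Fin n) ℝ) (hB : IsUnit B.det)
    (b : Fin n → EuclideanSpace ℝ (Fin n)) (hbcol : ∀ i k, b i k = B k i)
    (bstar : Fin n → EuclideanSpace ℝ (Fin n)) (hbstar : bstar = gramSchmidtFin n b)
    (μ : Fin n → Fin n → ℝ)
    (hμdef : ∀ j i, μ j i = (inner ℝ (b i) (bstar j) : ℝ) / ‖bstar j‖ ^ 2)
    (hμ : ∀ j i : Fin n, j < i → |μ j i| ≤ 1 / 2)
    (t : Fin n → ℝ)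
    (v : Fin n → ℝ) (hv : v = B.mulVec (fun i => (round (B⁻¹.mulVec t i) : ℝ))) :
    ‖(WithLp.equiv 2 (Fin n → ℝ)).symm (t - v)‖ ≤
      (1 / 2) * Real.sqrt (∑ j : Fin n,
        (1 + ((n - 1 - (j : ℕ) : ℕ) : ℝ) / 2) ^ 2 * ‖bstar j‖ ^ 2) := by
  set x : Fin n → ℝ := B⁻¹.mulVec t with hx
  set ε : Fin n → ℝ := fun i => x i - round (x i) with hε
  have hεle : ∀ i, |ε i| ≤ 1/2 := fun i => abs_sub_round (x i)
  have ht : B.mulVec x = t := by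
    rw [hx, Matrix.mulVec_mulVec, Matrix.mul_nonsing_inv _ hB, Matrix.one_mulVec]
  set u : EuclideanSpace ℝ (Fin n) := (WithLp.equiv 2 (Fin n → ℝ)).symm (t - v) with hu0
  have hu : u = ∑ i, ε i • b i := by
    ext k
    rw [eucl_sum_apply]
    simp only [hu0, WithLp.equiv_symm_apply, PiLp.toLp_apply, Pi.sub_apply, hv, ← ht,
      Matrix.mulVec, dotProduct, hε, PiLp.smul_apply, smul_eq_mul, hbcol]
    rw [← Finset.sum_sub_distrib]
    congr 1; funext i; ring
  have hgs : ∀ i, b i = bstar i + ∑ j ∈ Iio i, μ j i • bstar j := by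
    intro i
    have := @InnerProductSpace.gramSchmidt_def'' ℝ (EuclideanSpace ℝ (Fin n)) _ _ _ (Fin n) _ _
      (inferInstanceAs (WellFoundedLT (Fin n))) b i
    rw [hbstar]
    convert this using 3 with j hj
    · rfl
    rw [hμdef, hbstar, gramSchmidtFin, real_inner_comm]
    norm_num
  have horth : ∀ i j : Fin n, i ≠ j → (inner ℝ (bstar i) (bstar j) : ℝ) = 0 := by
    intro i j hij
    rw [hbstar]
    exact @InnerProductSpace.gramSchmidt_orthogonal ℝ (EuclideanSpace ℝ (Fin n)) _ _ _ (Fin n) _ _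
      (inferInstanceAs (WellFoundedLT (Fin n))) b i j hij
  set c : Fin n → ℝ := fun j => ε j + ∑ i ∈ Ioi j, μ j i * ε i with hc
  have huc : u = ∑ j, c j • bstar j := by
    rw [hu]
    have swap : ∑ i : Fin n, ∑ j ∈ Iio i, (μ j i * ε i) • bstar j
        = ∑ j : Fin n, ∑ i ∈ Ioi j, (μ j i * ε i) • bstar j := by
      rw [Finset.sum_sigma', Finset.sum_sigma']
      apply Finset.sum_nbij' (fun p => ⟨p.2, p.1⟩) (fun p => ⟨p.2, p.1⟩) <;>
        simp [Finset.mem_sigma]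
    calc ∑ i, ε i • b i
        = ∑ i, (ε i • bstar i + ∑ j ∈ Iio i, (μ j i * ε i) • bstar j) := by
          refine Finset.sum_congr rfl fun i _ => ?_
          rw [hgs i, smul_add, Finset.smul_sum]
          congr 1
          exact Finset.sum_congr rfl fun j _ => by rw [smul_smul, mul_comm]
      _ = (∑ i, ε i • bstar i) + ∑ i, ∑ j ∈ Iio i, (μ j i * ε i) • bstar j :=
          Finset.sum_add_distrib
      _ = (∑ j, ε j • bstar j) + ∑ j, ∑ i ∈ Ioi j, (μ j i * ε i) • bstar j := by rw [swap]
      _ = ∑ j, c j • bstar j := by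
          rw [← Finset.sum_add_distrib]
          refine Finset.sum_congr rfl fun j _ => ?_
          rw [hc]
          simp only [add_smul, Finset.sum_smul]
  -- norm squared
  have hnorm2 : ‖u‖^2 = ∑ j, c j ^ 2 * ‖bstar j‖^2 := by
    rw [huc, ← real_inner_self_eq_norm_sq, sum_inner]
    refine Finset.sum_congr rfl fun j _ => ?_
    rw [inner_sum, Finset.sum_eq_single j]
    · rw [real_inner_smul_left, real_inner_smul_right, real_inner_self_eq_norm_sq]
      ring
    · intro k _ hk
      rw [real_inner_smul_left, real_inner_smul_right, horth j k (Ne.symm hk)]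
      ring
    · intro h; exact absurd (Finset.mem_univ j) h
  -- bound on c
  have hcb : ∀ j, c j ^ 2 ≤ (1/4) * (1 + ((n - 1 - (j:ℕ) : ℕ) : ℝ)/2)^2 := by
    intro j
    have hb : |c j| ≤ (1/2) * (1 + ((n - 1 - (j:ℕ) : ℕ) : ℝ)/2) := by
      calc |c j| ≤ |ε j| + |∑ i ∈ Ioi j, μ j i * ε i| := abs_add_le _ _
        _ ≤ 1/2 + ∑ i ∈ Ioi j, |μ j i * ε i| := by
            gcongr
            · exact hεle j
            · exact Finset.abs_sum_le_sum_abs _ _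
        _ ≤ 1/2 + ∑ _i ∈ Ioi j, (1/4 : ℝ) := by
            gcongr 1/2 + ∑ i ∈ Ioi j, ?_ with i hi
            rw [abs_mul]
            calc |μ j i| * |ε i| ≤ (1/2) * (1/2) := by
                  exact mul_le_mul (hμ j i (Finset.mem_Ioi.mp hi)) (hεle i)
                    (abs_nonneg _) (by norm_num)
              _ = 1/4 := by norm_num
        _ = 1/2 + ((n - 1 - (j:ℕ) : ℕ) : ℝ) * (1/4) := by
            rw [Finset.sum_const, Fin.card_Ioi, nsmul_eq_mul]
        _ = (1/2) * (1 + ((n - 1 - (j:ℕ) : ℕ) : ℝ)/2) := by ring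
    calc c j ^ 2 = |c j| ^ 2 := (sq_abs _).symm
      _ ≤ ((1/2) * (1 + ((n - 1 - (j:ℕ) : ℕ) : ℝ)/2))^2 := by
          apply pow_le_pow_left₀ (abs_nonneg _) hb
      _ = (1/4) * (1 + ((n - 1 - (j:ℕ) : ℕ) : ℝ)/2)^2 := by ring
  -- conclude
  have h2 : ‖u‖^2 ≤ (1/4) * ∑ j : Fin n, (1 + ((n - 1 - (j:ℕ) : ℕ) : ℝ)/2)^2 * ‖bstar j‖^2 := by
    rw [hnorm2, Finset.mul_sum]
    refine Finset.sum_le_sum fun j _ => ?_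
    rw [← mul_assoc]
    exact mul_le_mul_of_nonneg_right (hcb j) (sq_nonneg _)
  have hS : (0:ℝ) ≤ ∑ j : Fin n, (1 + ((n - 1 - (j:ℕ) : ℕ) : ℝ)/2)^2 * ‖bstar j‖^2 :=
    Finset.sum_nonneg fun j _ => mul_nonneg (sq_nonneg _) (sq_nonneg _)
  calc ‖u‖ = Real.sqrt (‖u‖^2) := (Real.sqrt_sq (norm_nonneg u)).symm
    _ ≤ Real.sqrt ((1/4) * ∑ j : Fin n, (1 + ((n - 1 - (j:ℕ) : ℕ) : ℝ)/2)^2 * ‖bstar j‖^2) :=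
        Real.sqrt_le_sqrt h2
    _ = (1/2) * Real.sqrt (∑ j : Fin n, (1 + ((n - 1 - (j:ℕ) : ℕ) : ℝ)/2)^2 * ‖bstar j‖^2) := by
        rw [show (1/4:ℝ) = (1/2)^2 by norm_num, Real.sqrt_mul (sq_nonneg _),
          Real.sqrt_sq (by norm_num)]
end

section
/- Let B ∈ R^{n×n} be invertible with Gram–Schmidt vectors b_1^*,...,b_n^* and coefficients μ_{j,i} satisfying |μ_{j,i}| ≤ 1/2 for j < i. Then for the Babai rounding error e = t − B⌊B^{-1}t⌉, one has the squared-norm bound ‖e‖² ≤ (1/4) Σ_{j=1}^n (1 + (n−j)/2)² ‖b_j^*‖², and in particular if additionally ‖b_j^*‖ ≤ M for all j, then ‖e‖ ≤ (M/2) √(Σ_{k=0}^{n−1} (1 + k/2)²). -/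
open Finset

theorem babai_rounding_squared_error_bound
    (n : ℕ) (B : Matrix (Fin n) (Fin n) ℝ) (hB : IsUnit B.det)
    (b : Fin n → EuclideanSpace ℝ (Fin n)) (hbcol : ∀ i k, b i k = B k i)
    (bstar : Fin n → EuclideanSpace ℝ (Fin n)) (hbstar : bstar = gramSchmidtFin n b)
    (μ : Fin n → Fin n → ℝ)
    (hμdef : ∀ j i, μ j i = (inner ℝ (b i) (bstar j) : ℝ) / ‖bstar j‖ ^ 2)
    (hμ : ∀ j i : Fin n, j < i → |μ j i| ≤ 1 / 2)
    (t : Fin n → ℝ)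
    (e : Fin n → ℝ) (he : e = t - B.mulVec (fun i => (round (B⁻¹.mulVec t i) : ℝ))) :
    ‖(WithLp.equiv 2 (Fin n → ℝ)).symm e‖ ^ 2 ≤
        (1 / 4) * ∑ j : Fin n,
          (1 + ((n - 1 - (j : ℕ) : ℕ) : ℝ) / 2) ^ 2 * ‖bstar j‖ ^ 2 ∧
      ∀ M : ℝ, (∀ j, ‖bstar j‖ ≤ M) →
        ‖(WithLp.equiv 2 (Fin n → ℝ)).symm e‖ ≤
          (M / 2) * Real.sqrt (∑ k ∈ range n, (1 + (k : ℝ) / 2) ^ 2) := by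
  classical
  set δ : Fin n → ℝ := fun i => B⁻¹.mulVec t i - (round (B⁻¹.mulVec t i) : ℝ) with hδ
  have hδle : ∀ i, |δ i| ≤ 1 / 2 := fun i => abs_sub_round _
  set v : EuclideanSpace ℝ (Fin n) := (WithLp.equiv 2 (Fin n → ℝ)).symm e with hvdef
  -- e = B.mulVec δ
  have he' : e = B.mulVec δ := by
    have h1 : B.mulVec (B⁻¹.mulVec t) = t := by
      rw [Matrix.mulVec_mulVec, Matrix.mul_nonsing_inv _ hB, Matrix.one_mulVec]
    have h2 : δ = B⁻¹.mulVec t - (fun i => (round (B⁻¹.mulVec t i) : ℝ)) := by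
      funext i; simp [hδ]
    rw [he, h2, Matrix.mulVec_sub, h1]
  have hv : v = ∑ i : Fin n, δ i • b i := by
    ext k
    have hk : v k = e k := rfl
    rw [hk, he']
    simp only [Matrix.mulVec, dotProduct]
    rw [WithLp.ofLp_sum, Finset.sum_apply]
    exact Finset.sum_congr rfl fun i _ => by
      have : (δ i • b i) k = δ i * b i k := rfl
      rw [this, hbcol, mul_comm]
  -- decomposition of b i in terms of bstar
  set c : Fin n → Fin n → ℝ := fun j i => if j = i then 1 else μ j i with hc
  have hgg : ∀ j, bstar j = @InnerProductSpace.gramSchmidt ℝ _ _ _ _ (Fin n) _ _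
      (inferInstanceAs (WellFoundedLT (Fin n))) b j := by
    intro j; rw [hbstar]; rfl
  have horth : ∀ a a' : Fin n, a ≠ a' → (inner ℝ (bstar a) (bstar a') : ℝ) = 0 := by
    intro a a' h
    rw [hgg a, hgg a']
    exact @InnerProductSpace.gramSchmidt_orthogonal ℝ _ _ _ _ (Fin n) _ _
      (inferInstanceAs (WellFoundedLT (Fin n))) b a a' h
  have hbdec : ∀ i : Fin n, b i = ∑ j ∈ Iic i, c j i • bstar j := by
    intro i
    rw [← Finset.Iio_insert i, Finset.sum_insert (by simp)]
    have h1 : c i i = 1 := if_pos rfl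
    rw [h1, one_smul]
    have h2 := @InnerProductSpace.gramSchmidt_def'' ℝ _ _ _ _ (Fin n) _ _
      (inferInstanceAs (WellFoundedLT (Fin n))) b i
    rw [hgg i]
    convert h2 using 2
    refine Finset.sum_congr rfl fun j hj => ?_
    have hji : j ≠ i := (Finset.mem_Iio.1 hj).ne
    rw [hc]
    simp only [if_neg hji]
    rw [hμdef j i, real_inner_comm, hgg j]
    norm_cast
  set α : Fin n → ℝ := fun j => ∑ i ∈ Ici j, δ i * c j i with hα
  have hvdec : v = ∑ j : Fin n, α j • bstar j := by
    rw [hv]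
    have hfil : ∀ i : Fin n, Iic i = Finset.univ.filter (fun j => j ≤ i) := by
      intro i; ext j; simp
    have hfil' : ∀ j : Fin n, Ici j = Finset.univ.filter (fun i => j ≤ i) := by
      intro j; ext i; simp
    calc ∑ i : Fin n, δ i • b i
        = ∑ i : Fin n, ∑ j : Fin n, if j ≤ i then (δ i * c j i) • bstar j else 0 := by
          refine Finset.sum_congr rfl fun i _ => ?_
          rw [hbdec i, Finset.smul_sum]
          simp_rw [smul_smul]
          rw [hfil i, Finset.sum_filter]
      _ = ∑ j : Fin n, ∑ i : Fin n, if j ≤ i then (δ i * c j i) • bstar j else 0 :=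
          Finset.sum_comm
      _ = ∑ j : Fin n, α j • bstar j := by
          refine Finset.sum_congr rfl fun j _ => ?_
          rw [hα, ← Finset.sum_filter, ← hfil' j, Finset.sum_smul]
  -- Pythagoras
  have hnorm : ‖v‖ ^ 2 = ∑ j : Fin n, α j ^ 2 * ‖bstar j‖ ^ 2 := by
    rw [← real_inner_self_eq_norm_sq, hvdec, sum_inner]
    refine Finset.sum_congr rfl fun j _ => ?_
    rw [inner_sum]
    rw [Finset.sum_eq_single j]
    · rw [real_inner_smul_left, real_inner_smul_right, real_inner_self_eq_norm_sq]
      ring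
    · intro k _ hk
      rw [real_inner_smul_left, real_inner_smul_right, horth j k (Ne.symm hk)]
      ring
    · intro h; exact absurd (Finset.mem_univ j) h
  -- coefficient bound
  have hαle : ∀ j : Fin n, |α j| ≤ (1 / 2) * (1 + ((n - 1 - (j : ℕ) : ℕ) : ℝ) / 2) := by
    intro j
    rw [hα]
    refine le_trans (Finset.abs_sum_le_sum_abs _ _) ?_
    rw [← Finset.Ioi_insert j, Finset.sum_insert (by simp)]
    have h1 : |δ j * c j j| ≤ 1 / 2 := by
      have : c j j = 1 := if_pos rfl
      rw [this, mul_one]; exact hδle j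
    have h2 : ∑ i ∈ Ioi j, |δ i * c j i| ≤ (Ioi j).card • ((1:ℝ) / 4) := by
      refine Finset.sum_le_card_nsmul _ _ _ fun i hi => ?_
      have hji : j < i := Finset.mem_Ioi.1 hi
      have hcv : c j i = μ j i := if_neg hji.ne
      rw [hcv, abs_mul]
      calc |δ i| * |μ j i| ≤ (1 / 2) * (1 / 2) :=
            mul_le_mul (hδle i) (hμ j i hji) (abs_nonneg _) (by norm_num)
        _ = 1 / 4 := by norm_num
    have hcard : ((Ioi j).card : ℝ) = ((n - 1 - (j : ℕ) : ℕ) : ℝ) := by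
      rw [Fin.card_Ioi]
    calc |δ j * c j j| + ∑ i ∈ Ioi j, |δ i * c j i|
        ≤ 1 / 2 + (Ioi j).card * (1 / 4) := by
          refine add_le_add h1 ?_
          simpa [nsmul_eq_mul] using h2
      _ = (1 / 2) * (1 + ((n - 1 - (j : ℕ) : ℕ) : ℝ) / 2) := by
          rw [hcard]; ring
  -- part 1
  have part1 : ‖v‖ ^ 2 ≤ (1 / 4) * ∑ j : Fin n,
      (1 + ((n - 1 - (j : ℕ) : ℕ) : ℝ) / 2) ^ 2 * ‖bstar j‖ ^ 2 := by
    rw [hnorm, Finset.mul_sum]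
    refine Finset.sum_le_sum fun j _ => ?_
    have hb : α j ^ 2 ≤ ((1 / 2) * (1 + ((n - 1 - (j : ℕ) : ℕ) : ℝ) / 2)) ^ 2 := by
      rw [← sq_abs (α j)]
      have hnn : (0:ℝ) ≤ (1 / 2) * (1 + ((n - 1 - (j : ℕ) : ℕ) : ℝ) / 2) := by
        positivity
      exact pow_le_pow_left₀ (abs_nonneg _) (hαle j) 2
    calc α j ^ 2 * ‖bstar j‖ ^ 2
        ≤ ((1 / 2) * (1 + ((n - 1 - (j : ℕ) : ℕ) : ℝ) / 2)) ^ 2 * ‖bstar j‖ ^ 2 :=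
          mul_le_mul_of_nonneg_right hb (sq_nonneg _)
      _ = 1 / 4 * ((1 + ((n - 1 - (j : ℕ) : ℕ) : ℝ) / 2) ^ 2 * ‖bstar j‖ ^ 2) := by ring
  refine ⟨part1, ?_⟩
  -- part 2
  intro M hM
  rcases Nat.eq_zero_or_pos n with h0 | hpos
  · subst h0
    have hv0 : ‖v‖ = 0 := by
      rw [EuclideanSpace.norm_eq]
      simp
    rw [hv0]
    simp only [Finset.range_zero, Finset.sum_empty, Real.sqrt_zero, mul_zero]
    exact le_refl 0
  · have hM0 : 0 ≤ M := le_trans (norm_nonneg (bstar ⟨0, hpos⟩)) (hM ⟨0, hpos⟩)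
    set S : ℝ := ∑ k ∈ range n, (1 + (k : ℝ) / 2) ^ 2 with hS
    have hS0 : 0 ≤ S := Finset.sum_nonneg fun k _ => sq_nonneg _
    have hsum : ∑ j : Fin n, (1 + ((n - 1 - (j : ℕ) : ℕ) : ℝ) / 2) ^ 2 = S := by
      rw [hS, Fin.sum_univ_eq_sum_range (fun j => (1 + ((n - 1 - j : ℕ) : ℝ) / 2) ^ 2)]
      exact Finset.sum_range_reflect (fun k => (1 + (k : ℝ) / 2) ^ 2) n
    have hsq : ‖v‖ ^ 2 ≤ (M / 2) ^ 2 * S := by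
      refine le_trans part1 ?_
      have : ∑ j : Fin n, (1 + ((n - 1 - (j : ℕ) : ℕ) : ℝ) / 2) ^ 2 * ‖bstar j‖ ^ 2
          ≤ ∑ j : Fin n, (1 + ((n - 1 - (j : ℕ) : ℕ) : ℝ) / 2) ^ 2 * M ^ 2 := by
        refine Finset.sum_le_sum fun j _ => ?_
        refine mul_le_mul_of_nonneg_left ?_ (sq_nonneg _)
        exact pow_le_pow_left₀ (norm_nonneg _) (hM j) 2
      calc (1 / 4) * ∑ j : Fin n, (1 + ((n - 1 - (j : ℕ) : ℕ) : ℝ) / 2) ^ 2 * ‖bstar j‖ ^ 2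
          ≤ (1 / 4) * ∑ j : Fin n, (1 + ((n - 1 - (j : ℕ) : ℕ) : ℝ) / 2) ^ 2 * M ^ 2 := by
            exact mul_le_mul_of_nonneg_left this (by norm_num)
        _ = (M / 2) ^ 2 * ∑ j : Fin n, (1 + ((n - 1 - (j : ℕ) : ℕ) : ℝ) / 2) ^ 2 := by
            rw [← Finset.sum_mul]
            ring
        _ = (M / 2) ^ 2 * S := by rw [hsum]
    have : ‖v‖ ≤ Real.sqrt ((M / 2) ^ 2 * S) := by
      rw [← Real.sqrt_sq (norm_nonneg v)]
      exact Real.sqrt_le_sqrt hsq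
    calc ‖v‖ ≤ Real.sqrt ((M / 2) ^ 2 * S) := this
      _ = (M / 2) * Real.sqrt S := by
        rw [Real.sqrt_mul (sq_nonneg _), Real.sqrt_sq (by positivity)]
end
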